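/- Fix 1 ≤ j ≤ n-2 and let A = [j-1] ∪ {j+1} = {1,...,j-1,j+1}. Every permutation σ ∈ S_n with σ(1)+...+σ(j) ≥ binom(j+1,2)+1 satisfies →A·e_A ≤ σ in the Bruhat order, where →A·e_A is the permutation whose one-line notation is 1,2,...,j-1,j+1 followed by j and then j+2,...,n. -/

import Mathlib

/-- Number of inversions (Coxeter length) of a permutation of `Fin n`. -/
def invCount {n : ℕ} (σ : Equiv.Perm (Fin n)) : ℕ :=
  ((Finset.univ : Finset (Fin n × Fin n)).filter
    (fun p => p.1 < p.2 ∧ σ p.2 < σ p.1)).card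

/-- Covering relation of the strong Bruhat order: multiply by a transposition
(on values) and increase the length by exactly one. -/
def BruhatCover {n : ℕ} (u v : Equiv.Perm (Fin n)) : Prop :=
  (∃ a b : Fin n, a ≠ b ∧ v = Equiv.swap a b * u) ∧ invCount v = invCount u + 1

/-- The strong Bruhat order on `Equiv.Perm (Fin n)`. -/
def BruhatLE {n : ℕ} : Equiv.Perm (Fin n) → Equiv.Perm (Fin n) → Prop :=
  Relation.ReflTransGen BruhatCover

/-- Sum of the first `j` one-line values of `σ` (values taken in `{1, …, n}`). -/
def firstSum {n : ℕ} (σ : Equiv.Perm (Fin n)) (j : ℕ) : ℕ :=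
  ∑ i ∈ Finset.univ.filter (fun i : Fin n => (i : ℕ) < j), ((σ i : ℕ) + 1)

namespace MinPermAux

open Equiv Finset

variable {n : ℕ}

lemma flip_classify {q p : Fin n} (hqp : q < p) {x y : Fin n} (hxy : x < y)
    (hf : Equiv.swap q p y < Equiv.swap q p x) :
    (x = q ∧ y = p) ∨ (x = q ∧ y ≠ p ∧ y < p) ∨ (y = p ∧ x ≠ q ∧ q < x) := by
  rw [Equiv.swap_apply_def, Equiv.swap_apply_def] at hf
  split_ifs at hf <;>
    simp only [Fin.lt_def, Fin.ext_iff, ne_eq] at hqp hxy hf ⊢ <;> omega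

lemma cover_key (σ : Equiv.Perm (Fin n)) (q p : Fin n) (hqp : q < p)
    (hval : σ p < σ q)
    (hmid : ∀ r : Fin n, q < r → r < p → σ r < σ p ∨ σ q < σ r) :
    invCount σ = invCount (σ * Equiv.swap q p) + 1 := by
  classical
  have hss : ∀ x, Equiv.swap q p (Equiv.swap q p x) = x :=
    fun x => Equiv.swap_apply_self q p x
  have hsq : Equiv.swap q p q = p := Equiv.swap_apply_left q p
  have hsp : Equiv.swap q p p = q := Equiv.swap_apply_right q p
  have hso : ∀ x : Fin n, x ≠ q → x ≠ p → Equiv.swap q p x = x := fun x h1 h2 =>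
    Equiv.swap_apply_of_ne_of_ne h1 h2
  set A : Finset (Fin n × Fin n) :=
    univ.filter (fun z => z.1 < z.2 ∧ σ z.2 < σ z.1) with hA
  set B : Finset (Fin n × Fin n) :=
    univ.filter (fun z => Equiv.swap q p z.1 < Equiv.swap q p z.2 ∧ σ z.2 < σ z.1) with hB
  have hAcard : invCount σ = A.card := rfl
  have hBcard : invCount (σ * Equiv.swap q p) = B.card := by
    unfold invCount
    apply Finset.card_nbij'
      (i := fun z => (Equiv.swap q p z.1, Equiv.swap q p z.2))
      (j := fun z => (Equiv.swap q p z.1, Equiv.swap q p z.2))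
    · intro z hz
      simp only [Finset.mem_coe, mem_filter, mem_univ, true_and, Equiv.Perm.mul_apply] at hz
      simp only [Finset.mem_coe, hB, mem_filter, mem_univ, true_and, hss]
      exact (Finset.mem_filter.1 hz).2
    · intro z hz
      simp only [Finset.mem_coe, hB, mem_filter, mem_univ, true_and] at hz
      simp only [Finset.mem_coe, mem_filter, mem_univ, true_and, Equiv.Perm.mul_apply, hss]
      exact Finset.mem_filter.2 ⟨Finset.mem_univ _, by simpa [hss] using hz⟩
    · intro z _; simp [hss]
    · intro z _; simp [hss]
  have hABd : (A \ B).erase (q, p) = univ.filter (fun z : Fin n × Fin n =>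
      (z.1 = q ∧ q < z.2 ∧ z.2 < p ∧ σ z.2 < σ p) ∨
      (z.2 = p ∧ q < z.1 ∧ z.1 < p ∧ σ q < σ z.1)) := by
    ext z
    simp only [Finset.mem_erase, mem_sdiff, hA, hB, mem_filter, mem_univ, true_and, not_and,
      ne_eq]
    constructor
    · rintro ⟨hne, ⟨h12, hσ21⟩, hnB⟩
      have hflip : Equiv.swap q p z.2 < Equiv.swap q p z.1 := by
        rcases lt_trichotomy (Equiv.swap q p z.1) (Equiv.swap q p z.2) with h | h | h
        · exact absurd hσ21 (hnB h)
        · exact absurd ((Equiv.swap q p).injective h) (ne_of_lt h12)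
        · exact h
      rcases flip_classify hqp h12 hflip with ⟨e1, e2⟩ | ⟨e1, e2, e3⟩ | ⟨e1, e2, e3⟩
      · exact absurd (Prod.ext e1 e2) (by simpa using hne)
      · left
        have hy : q < z.2 := e1 ▸ h12
        refine ⟨e1, hy, e3, ?_⟩
        rcases hmid z.2 hy e3 with h | h
        · exact h
        · rw [e1] at hσ21; exact absurd hσ21 (not_lt.2 h.le)
      · right
        have hx : z.1 < p := e1 ▸ h12
        refine ⟨e1, e3, hx, ?_⟩
        rcases hmid z.1 e3 hx with h | h
        · rw [e1] at hσ21; exact absurd hσ21 (not_lt.2 h.le)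
        · exact h
    · rintro (⟨e1, h1, h2, h3⟩ | ⟨e1, h1, h2, h3⟩)
      · refine ⟨?_, ⟨e1 ▸ h1, e1 ▸ (h3.trans hval)⟩, ?_⟩
        · intro hc; rw [hc] at h2; exact absurd h2 (lt_irrefl _)
        · intro hlt
          exfalso
          rw [e1, hsq, hso z.2 (ne_of_gt h1) (ne_of_lt h2)] at hlt
          exact absurd (h2.trans hlt) (lt_irrefl _)
      · refine ⟨?_, ⟨e1 ▸ h2, e1 ▸ (hval.trans h3)⟩, ?_⟩
        · intro hc; rw [hc] at h1; exact absurd h1 (lt_irrefl _)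
        · intro hlt
          exfalso
          rw [e1, hsp, hso z.1 (ne_of_gt h1) (ne_of_lt h2)] at hlt
          exact absurd (hlt.trans h1) (lt_irrefl _)
  have hBAd : B \ A = univ.filter (fun z : Fin n × Fin n =>
      (z.2 = q ∧ q < z.1 ∧ z.1 < p ∧ σ q < σ z.1) ∨
      (z.1 = p ∧ q < z.2 ∧ z.2 < p ∧ σ z.2 < σ p)) := by
    ext z
    simp only [mem_sdiff, hA, hB, mem_filter, mem_univ, true_and, not_and]
    constructor
    · rintro ⟨⟨hs12, hσ21⟩, hnA⟩
      have h21 : z.2 < z.1 := by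
        rcases lt_trichotomy z.1 z.2 with h | h | h
        · exact absurd hσ21 (hnA h)
        · exact absurd (congrArg σ h) (ne_of_gt hσ21)
        · exact h
      rcases flip_classify hqp h21 hs12 with ⟨e1, e2⟩ | ⟨e1, e2, e3⟩ | ⟨e1, e2, e3⟩
      · rw [e1, e2] at hσ21
        exact absurd (hval.trans hσ21) (lt_irrefl _)
      · left
        have hx : q < z.1 := e1 ▸ h21
        have hσx : σ q < σ z.1 := e1 ▸ hσ21
        exact ⟨e1, hx, e3, hσx⟩
      · right
        have hy : z.2 < p := e1 ▸ h21
        have hσy : σ z.2 < σ p := e1 ▸ hσ21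
        exact ⟨e1, e3, hy, hσy⟩
    · rintro (⟨e1, h1, h2, h3⟩ | ⟨e1, h1, h2, h3⟩)
      · constructor
        · constructor
          · rw [e1, hsq, hso z.1 (ne_of_gt h1) (ne_of_lt h2)]
            exact h2
          · rw [e1]; exact h3
        · intro hlt
          rw [e1] at hlt
          exact absurd (h1.trans hlt) (lt_irrefl _)
      · constructor
        · constructor
          · rw [e1, hsp, hso z.2 (ne_of_gt h1) (ne_of_lt h2)]
            exact h1
          · rw [e1]; exact h3
        · intro hlt
          rw [e1] at hlt
          exact absurd (hlt.trans h2) (lt_irrefl _)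
  have hqpA : (q, p) ∈ A \ B := by
    simp only [hA, hB, mem_sdiff, mem_filter, mem_univ, true_and, not_and, hsq, hsp]
    exact ⟨⟨hqp, hval⟩, fun h => absurd (h.trans hqp) (lt_irrefl _)⟩
  have hcard : ((A \ B).erase (q, p)).card = (B \ A).card := by
    rw [hABd, hBAd]
    apply Finset.card_nbij' (i := fun z => if z.1 = q then (p, z.2) else (z.1, q))
      (j := fun z => if z.1 = p then (q, z.2) else (z.1, p))
    · intro z hz
      simp only [Finset.mem_coe, mem_filter, mem_univ, true_and] at hz ⊢
      rcases hz with ⟨e1, h1, h2, h3⟩ | ⟨e1, h1, h2, h3⟩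
      · rw [if_pos e1]
        right
        exact ⟨rfl, h1, h2, h3⟩
      · rw [if_neg (by intro hc; rw [hc] at h1; exact absurd h1 (lt_irrefl _))]
        left
        exact ⟨rfl, h1, h2, h3⟩
    · intro z hz
      simp only [Finset.mem_coe, mem_filter, mem_univ, true_and] at hz ⊢
      rcases hz with ⟨e1, h1, h2, h3⟩ | ⟨e1, h1, h2, h3⟩
      · rw [if_neg (by intro hc; rw [hc] at h2; exact absurd h2 (lt_irrefl _))]
        right
        exact ⟨rfl, h1, h2, h3⟩
      · rw [if_pos e1]
        left
        exact ⟨rfl, h1, h2, h3⟩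
    · intro z hz
      simp only [Finset.mem_coe, mem_filter, mem_univ, true_and] at hz
      rcases hz with ⟨e1, h1, h2, h3⟩ | ⟨e1, h1, h2, h3⟩
      · have i1 : (if z.1 = q then ((p, z.2) : Fin n × Fin n) else (z.1, q)) = (p, z.2) :=
          if_pos e1
        beta_reduce; rw [i1]
        have i2 : (if (p : Fin n) = p then ((q, z.2) : Fin n × Fin n) else (p, p)) = (q, z.2) :=
          if_pos rfl
        simp only [i2, if_pos rfl]
        exact Prod.ext e1.symm rfl
      · have i1 : (if z.1 = q then ((p, z.2) : Fin n × Fin n) else (z.1, q)) = (z.1, q) :=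
          if_neg (by intro hc; rw [hc] at h1; exact absurd h1 (lt_irrefl _))
        beta_reduce; rw [i1]
        have i2 : (if z.1 = p then ((q, q) : Fin n × Fin n) else (z.1, p)) = (z.1, p) :=
          if_neg (by intro hc; rw [hc] at h2; exact absurd h2 (lt_irrefl _))
        simp only [i2]
        exact Prod.ext rfl e1.symm
    · intro z hz
      simp only [Finset.mem_coe, mem_filter, mem_univ, true_and] at hz
      rcases hz with ⟨e1, h1, h2, h3⟩ | ⟨e1, h1, h2, h3⟩
      · have i1 : (if z.1 = p then ((q, z.2) : Fin n × Fin n) else (z.1, p)) = (z.1, p) :=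
          if_neg (by intro hc; rw [hc] at h2; exact absurd h2 (lt_irrefl _))
        beta_reduce; rw [i1]
        have i2 : (if z.1 = q then ((p, p) : Fin n × Fin n) else (z.1, q)) = (z.1, q) :=
          if_neg (by intro hc; rw [hc] at h1; exact absurd h1 (lt_irrefl _))
        simp only [i2]
        exact Prod.ext rfl e1.symm
      · have i1 : (if z.1 = p then ((q, z.2) : Fin n × Fin n) else (z.1, p)) = (q, z.2) :=
          if_pos e1
        beta_reduce; rw [i1]
        have i2 : (if (q : Fin n) = q then ((p, z.2) : Fin n × Fin n) else (q, q)) = (p, z.2) :=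
          if_pos rfl
        simp only [i2, if_pos rfl]
        exact Prod.ext e1.symm rfl
  have h1 : (A \ B).card = (B \ A).card + 1 := by
    rw [← Finset.card_erase_add_one hqpA, hcard]
  have h2 : (A \ B).card + B.card = (B \ A).card + A.card := by
    rw [Finset.card_sdiff_add_card, Finset.card_sdiff_add_card, Finset.union_comm]
  rw [hAcard, hBcard]
  omega

lemma cover_swap (σ : Equiv.Perm (Fin n)) (q p : Fin n) (hqp : q < p)
    (hval : σ p < σ q)
    (hmid : ∀ r : Fin n, q < r → r < p → σ r < σ p ∨ σ q < σ r) :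
    BruhatCover (σ * Equiv.swap q p) σ := by
  constructor
  · refine ⟨σ q, σ p, fun hc => (ne_of_lt hval) hc.symm, ?_⟩
    rw [Equiv.mul_swap_eq_swap_mul, ← mul_assoc, Equiv.swap_mul_self, one_mul]
  · exact cover_key σ q p hqp hval hmid

lemma firstSum_swap_same_block (σ : Equiv.Perm (Fin n)) (j : ℕ) (q p : Fin n)
    (h : ((q : ℕ) < j ∧ (p : ℕ) < j) ∨ (j ≤ (q : ℕ) ∧ j ≤ (p : ℕ))) :
    firstSum (σ * Equiv.swap q p) j = firstSum σ j := by
  classical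
  unfold firstSum
  have hstab : ∀ i : Fin n, (i : ℕ) < j → ((Equiv.swap q p i : Fin n) : ℕ) < j := by
    intro i hi
    rcases eq_or_ne i q with rfl | hiq
    · rcases h with ⟨h1, h2⟩ | ⟨h1, h2⟩
      · rw [Equiv.swap_apply_left]; exact h2
      · exact absurd hi (not_lt.2 h1)
    rcases eq_or_ne i p with rfl | hip
    · rcases h with ⟨h1, h2⟩ | ⟨h1, h2⟩
      · rw [Equiv.swap_apply_right]; exact h1
      · exact absurd hi (not_lt.2 h2)
    · rw [Equiv.swap_apply_of_ne_of_ne hiq hip]; exact hi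
  apply Finset.sum_nbij' (i := fun i => Equiv.swap q p i) (j := fun i => Equiv.swap q p i)
  · intro a ha
    simp only [mem_filter, mem_univ, true_and] at ha ⊢
    exact hstab a ha
  · intro a ha
    simp only [mem_filter, mem_univ, true_and] at ha ⊢
    exact hstab a ha
  · intro a _; exact Equiv.swap_apply_self q p a
  · intro a _; exact Equiv.swap_apply_self q p a
  · intro a _; simp [Equiv.Perm.mul_apply]

lemma firstSum_swap_cross (σ : Equiv.Perm (Fin n)) (j : ℕ) (q p : Fin n)
    (hq : (q : ℕ) < j) (hp : j ≤ (p : ℕ)) (hval : ((σ p : Fin n) : ℕ) + 1 = σ q) :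
    firstSum (σ * Equiv.swap q p) j + 1 = firstSum σ j := by
  classical
  unfold firstSum
  set F := Finset.univ.filter (fun i : Fin n => (i : ℕ) < j) with hF
  have hqF : q ∈ F := by simp [hF, hq]
  have e1 : ∀ i ∈ F.erase q, (((σ * Equiv.swap q p) i : Fin n) : ℕ) + 1 = (σ i : ℕ) + 1 := by
    intro i hi
    obtain ⟨hiq, hiF⟩ := Finset.mem_erase.1 hi
    simp only [hF, mem_filter, mem_univ, true_and] at hiF
    have hip : i ≠ p := by
      intro hc; rw [hc] at hiF; exact absurd hiF (not_lt.2 hp)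
    simp [Equiv.Perm.mul_apply, Equiv.swap_apply_of_ne_of_ne hiq hip]
  rw [← Finset.add_sum_erase F _ hqF, ← Finset.add_sum_erase F _ hqF,
    Finset.sum_congr rfl e1]
  simp only [Equiv.Perm.mul_apply, Equiv.swap_apply_left]
  omega

lemma nat_run (f : ℕ → ℕ) (a b : ℕ) (hstep : ∀ i, a ≤ i → i + 1 ≤ b → f i < f (i + 1)) :
    ∀ y, a ≤ y → y ≤ b → f a + (y - a) ≤ f y := by
  intro y
  induction y with
  | zero => intro h1 _; have : a = 0 := Nat.le_zero.1 h1; subst this; simp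
  | succ y ih =>
    intro h1 h2
    rcases Nat.lt_or_ge y a with h | h
    · have : a = y + 1 := by omega
      subst this; simp
    · have hy := ih h (by omega)
      have := hstep y h h2
      omega

lemma firstSum_eq_range (σ : Equiv.Perm (Fin n)) (j : ℕ) (hn : 0 < n) (hjn : j ≤ n)
    (F : ℕ → ℕ) (hF : ∀ (i : ℕ) (h : i < n), F i = σ ⟨i, h⟩) :
    firstSum σ j = ∑ i ∈ Finset.range j, (F i + 1) := by
  classical
  unfold firstSum
  apply Finset.sum_nbij' (i := fun a : Fin n => (a : ℕ))
    (j := fun a : ℕ => if h : a < n then (⟨a, h⟩ : Fin n) else (⟨0, hn⟩ : Fin n))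
  · intro a ha
    simp only [mem_filter, mem_univ, true_and] at ha
    simpa using ha
  · intro a ha
    simp only [Finset.mem_range] at ha
    have han : a < n := lt_of_lt_of_le ha hjn
    simp [dif_pos han, ha]
  · intro a ha
    simp [Fin.is_lt]
  · intro a ha
    simp only [Finset.mem_range] at ha
    have han : a < n := lt_of_lt_of_le ha hjn
    simp [dif_pos han]
  · intro a ha
    rw [hF a a.is_lt]

lemma sum_filter_lt (g : ℕ → ℕ) (m : ℕ) (hn : 0 < n) (hmn : m ≤ n) :
    (∑ i ∈ Finset.univ.filter (fun i : Fin n => (i : ℕ) < m), g (i : ℕ))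
      = ∑ i ∈ Finset.range m, g i := by
  classical
  apply Finset.sum_nbij' (i := fun a : Fin n => (a : ℕ))
    (j := fun a : ℕ => if h : a < n then (⟨a, h⟩ : Fin n) else (⟨0, hn⟩ : Fin n))
  · intro a ha
    simp only [mem_filter, mem_univ, true_and] at ha
    simpa using ha
  · intro a ha
    simp only [Finset.mem_range] at ha
    have han : a < n := lt_of_lt_of_le ha hmn
    simp [dif_pos han, ha]
  · intro a ha
    simp [Fin.is_lt]
  · intro a ha
    simp only [Finset.mem_range] at ha
    have han : a < n := lt_of_lt_of_le ha hmn
    simp [dif_pos han]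
  · intro a ha
    rfl

lemma card_filter_lt (m : ℕ) (hn : 0 < n) (hmn : m ≤ n) :
    (Finset.univ.filter (fun i : Fin n => (i : ℕ) < m)).card = m := by
  classical
  rw [Finset.card_eq_sum_ones]
  rw [show (∑ _x ∈ Finset.univ.filter (fun i : Fin n => (i : ℕ) < m), 1)
      = (∑ i ∈ Finset.univ.filter (fun i : Fin n => (i : ℕ) < m), (fun _ : ℕ => 1) (i : ℕ))
      from rfl]
  rw [sum_filter_lt (fun _ => 1) m hn hmn]
  simp

lemma classify (n j : ℕ) (hj : 1 ≤ j) (hjn : j + 2 ≤ n)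
    (σ τmin : Equiv.Perm (Fin n))
    (hτmin : ∀ i : Fin n, (τmin i : ℕ) =
      if (i : ℕ) < j - 1 then (i : ℕ)
      else if (i : ℕ) = j - 1 then j
      else if (i : ℕ) = j then j - 1
      else (i : ℕ))
    (hsum : firstSum σ j = j * (j + 1) / 2 + 1)
    (hinc : ∀ (i : ℕ) (h1 : i + 1 < n), (i + 1 < j ∨ j ≤ i) →
      (σ ⟨i, Nat.lt_of_succ_lt h1⟩ : ℕ) < σ ⟨i + 1, h1⟩) :
    σ = τmin := by
  classical
  set F : ℕ → ℕ := fun i => if h : i < n then ((σ ⟨i, h⟩ : Fin n) : ℕ) else 0 with hFdef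
  have hF : ∀ (i : ℕ) (h : i < n), F i = σ ⟨i, h⟩ := by
    intro i h; simp [hFdef, dif_pos h]
  have hFstep : ∀ i, i + 1 < n → (i + 1 < j ∨ j ≤ i) → F i < F (i + 1) := by
    intro i h1 h2
    rw [hF i (Nat.lt_of_succ_lt h1), hF (i + 1) h1]
    exact hinc i h1 h2
  have hFinj : ∀ x y, x < n → y < n → F x = F y → x = y := by
    intro x y hx hy hxy
    rw [hF x hx, hF y hy] at hxy
    have h2 := σ.injective (Fin.ext hxy)
    simpa using h2
  have mono1 : ∀ x y, x ≤ y → y < j → F x + (y - x) ≤ F y := by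
    intro x y hxy hyj
    exact nat_run F x (j - 1) (fun i hi hij => hFstep i (by omega) (by omega)) y hxy (by omega)
  have mono2 : ∀ x y, j ≤ x → x ≤ y → y < n → F x + (y - x) ≤ F y := by
    intro x y hjx hxy hyn
    exact nat_run F x (n - 1) (fun i hi hij => hFstep i (by omega) (by omega)) y hxy (by omega)
  have hrange : firstSum σ j = ∑ i ∈ Finset.range j, (F i + 1) :=
    firstSum_eq_range σ j (by omega) (by omega) F hF
  have hT : j * (j + 1) / 2 = (∑ i ∈ Finset.range j, i) + j := by
    have h1 : (∑ i ∈ Finset.range (j + 1), i) = (∑ i ∈ Finset.range j, i) + j :=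
      Finset.sum_range_succ (fun i => i) j
    have h2 : (∑ i ∈ Finset.range (j + 1), i) = (j + 1) * (j + 1 - 1) / 2 :=
      Finset.sum_range_id (j + 1)
    rw [Nat.add_sub_cancel] at h2
    rw [Nat.mul_comm j (j + 1)]
    omega
  have hSrec : (∑ i ∈ Finset.range j, i) = (∑ i ∈ Finset.range (j - 1), i) + (j - 1) := by
    have h1 : (∑ i ∈ Finset.range ((j - 1) + 1), i) = (∑ i ∈ Finset.range (j - 1), i) + (j - 1) :=
      Finset.sum_range_succ (fun i => i) (j - 1)
    rw [show j - 1 + 1 = j by omega] at h1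
    exact h1
  have hsumF : (∑ i ∈ Finset.range j, F i) + j = j * (j + 1) / 2 + 1 := by
    rw [hrange] at hsum
    rw [Finset.sum_add_distrib, Finset.sum_const, Finset.card_range, smul_eq_mul, mul_one] at hsum
    omega
  have hge1 : ∀ i, i < j → i ≤ F i := by
    intro i hij
    have := mono1 0 i (Nat.zero_le _) hij
    omega
  have heq1 : ∀ i, i < j - 1 → F i = i := by
    intro i0 hi0
    by_contra hne
    have hgt : i0 + 1 ≤ F i0 := by
      have := hge1 i0 (by omega)
      omega
    have hlast : j ≤ F (j - 1) := by
      have := mono1 i0 (j - 1) (by omega) (by omega)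
      omega
    set g : ℕ → ℕ := fun i => i + (if i = i0 then 1 else 0) + (if i = j - 1 then 1 else 0)
      with hg
    have hle : ∀ i ∈ Finset.range j, g i ≤ F i := by
      intro i hi
      simp only [Finset.mem_range] at hi
      show i + (if i = i0 then 1 else 0) + (if i = j - 1 then 1 else 0) ≤ F i
      by_cases h1 : i = i0
      · subst h1
        rw [if_pos rfl, if_neg (show ¬ i = j - 1 by omega)]
        omega
      · by_cases h2 : i = j - 1
        · subst h2
          rw [if_neg h1, if_pos rfl]
          omega
        · rw [if_neg h1, if_neg h2]
          have := hge1 i hi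
          omega
    have hgsum : (∑ i ∈ Finset.range j, g i) = (∑ i ∈ Finset.range j, i) + 2 := by
      simp only [hg]
      rw [Finset.sum_add_distrib, Finset.sum_add_distrib]
      rw [Finset.sum_ite_eq' (Finset.range j) i0 (fun _ => 1),
        Finset.sum_ite_eq' (Finset.range j) (j - 1) (fun _ => 1)]
      rw [if_pos (Finset.mem_range.2 (by omega : i0 < j)),
        if_pos (Finset.mem_range.2 (by omega : j - 1 < j))]
    have hlesum := Finset.sum_le_sum hle
    omega
  have heqj1 : F (j - 1) = j := by
    have hsplit : (∑ i ∈ Finset.range ((j - 1) + 1), F i)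
        = (∑ i ∈ Finset.range (j - 1), F i) + F (j - 1) := Finset.sum_range_succ F (j - 1)
    rw [show j - 1 + 1 = j by omega] at hsplit
    have hsmall : (∑ i ∈ Finset.range (j - 1), F i) = ∑ i ∈ Finset.range (j - 1), i :=
      Finset.sum_congr rfl (fun i hi => heq1 i (Finset.mem_range.1 hi))
    omega
  have hFj : F j = j - 1 := by
    have hjln : j < n := by omega
    set r : Fin n := σ.symm ⟨j - 1, by omega⟩ with hr
    have hFr : F (r : ℕ) = j - 1 := by
      rw [hF (r : ℕ) r.is_lt]
      have : σ r = ⟨j - 1, by omega⟩ := by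
        rw [hr]; exact σ.apply_symm_apply _
      rw [show (⟨(r : ℕ), r.is_lt⟩ : Fin n) = r from Fin.eta r r.is_lt, this]
    rcases Nat.lt_trichotomy (r : ℕ) j with h | h | h
    · rcases Nat.lt_or_ge (r : ℕ) (j - 1) with h2 | h2
      · rw [heq1 _ h2] at hFr; omega
      · have : (r : ℕ) = j - 1 := by omega
        rw [this, heqj1] at hFr; omega
    · rw [← h]; exact h ▸ hFr
    · exfalso
      have hm := mono2 j (r : ℕ) (le_refl j) (by omega) r.is_lt
      rw [hFr] at hm
      have hFjlt : F j < j - 1 := by omega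
      have := hFinj j (F j) hjln (by omega) (heq1 (F j) hFjlt).symm
      omega
  have hgei : ∀ i, j + 1 ≤ i → i < n → i ≤ F i := by
    have hbase : j + 1 ≤ F (j + 1) := by
      by_contra hc
      push_neg at hc
      have hjn1 : j + 1 < n := by omega
      rcases Nat.lt_trichotomy (F (j + 1)) (j - 1) with h | h | h
      · have := hFinj (j + 1) (F (j + 1)) hjn1 (by omega) (heq1 (F (j + 1)) h).symm
        omega
      · have := hFinj (j + 1) j hjn1 (by omega) (h.trans hFj.symm)
        omega
      · have hFe : F (j + 1) = j := by omega
        have := hFinj (j + 1) (j - 1) hjn1 (by omega) (hFe.trans heqj1.symm)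
        omega
    intro i
    induction i with
    | zero => omega
    | succ k ih =>
      intro hk hkn
      rcases Nat.lt_or_ge k (j + 1) with h | h
      · have : k + 1 = j + 1 := by omega
        rw [this]; exact hbase
      · have h1 := ih (by omega) (by omega)
        have h2 := hFstep k (by omega) (Or.inr (by omega))
        omega
  have htotF : (∑ i ∈ Finset.range n, F i) = ∑ i : Fin n, ((σ i : Fin n) : ℕ) := by
    rw [← Fin.sum_univ_eq_sum_range F n]
    apply Finset.sum_congr rfl
    intro i _
    rw [hF (i : ℕ) i.is_lt]
  have htotid : (∑ i ∈ Finset.range n, i) = ∑ i : Fin n, ((i : Fin n) : ℕ) :=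
    (Fin.sum_univ_eq_sum_range (fun i => i) n).symm
  have hperm : (∑ i : Fin n, ((σ i : Fin n) : ℕ)) = ∑ i : Fin n, ((i : Fin n) : ℕ) :=
    Equiv.sum_comp σ (fun i : Fin n => (i : ℕ))
  have htot : (∑ i ∈ Finset.range n, F i) = ∑ i ∈ Finset.range n, i := by
    rw [htotF, hperm, htotid]
  have hsplitn : ∀ f : ℕ → ℕ, (∑ i ∈ Finset.range n, f i)
      = (∑ i ∈ Finset.range (j + 1), f i) + (∑ i ∈ Finset.Ico (j + 1) n, f i) := by
    intro f
    rw [Finset.range_eq_Ico, ← Finset.sum_Ico_consecutive f (Nat.zero_le (j + 1)) (by omega),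
      ← Finset.range_eq_Ico]
  have hheadF : (∑ i ∈ Finset.range (j + 1), F i) = ∑ i ∈ Finset.range (j + 1), i := by
    have a1 : (∑ i ∈ Finset.range (j + 1), F i) = (∑ i ∈ Finset.range j, F i) + F j :=
      Finset.sum_range_succ F j
    have b1 : (∑ i ∈ Finset.range (j + 1), i) = (∑ i ∈ Finset.range j, i) + j :=
      Finset.sum_range_succ (fun i => i) j
    omega
  have htail : ∀ i ∈ Finset.Ico (j + 1) n, i = F i := by
    have h1 := hsplitn F
    have h2 := hsplitn (fun i => i)
    have hle : ∀ i ∈ Finset.Ico (j + 1) n, i ≤ F i := by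
      intro i hi
      obtain ⟨hi1, hi2⟩ := Finset.mem_Ico.1 hi
      exact hgei i hi1 hi2
    refine (Finset.sum_eq_sum_iff_of_le hle).1 ?_
    omega
  apply Equiv.ext
  intro i
  apply Fin.ext
  have hvi : (σ i : ℕ) = F (i : ℕ) := by
    rw [hF (i : ℕ) i.is_lt]
  rw [hvi, hτmin i]
  rcases Nat.lt_trichotomy ((i : ℕ)) (j - 1) with h | h | h
  · rw [heq1 _ h, if_pos h]
  · rw [h, heqj1, if_neg (by omega), if_pos rfl]
  · rcases Nat.lt_trichotomy ((i : ℕ)) j with h2 | h2 | h2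
    · omega
    · rw [h2, hFj, if_neg (by omega), if_neg (by omega), if_pos rfl]
    · have := htail (i : ℕ) (Finset.mem_Ico.2 ⟨by omega, i.is_lt⟩)
      rw [← this, if_neg (by omega), if_neg (by omega), if_neg (by omega)]

end MinPermAux

theorem min_perm_above_hyperplane (n j : ℕ) (hj : 1 ≤ j) (hjn : j + 2 ≤ n)
    (τmin : Equiv.Perm (Fin n))
    (hτmin : ∀ i : Fin n, (τmin i : ℕ) =
      if (i : ℕ) < j - 1 then (i : ℕ)
      else if (i : ℕ) = j - 1 then j
      else if (i : ℕ) = j then j - 1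
      else (i : ℕ))
    (σ : Equiv.Perm (Fin n)) (hσ : j * (j + 1) / 2 + 1 ≤ firstSum σ j) :
    BruhatLE τmin σ := by
  classical
  open MinPermAux Finset in
  -- a predecessor-producing step
  have step : ∀ σ : Equiv.Perm (Fin n), j * (j + 1) / 2 + 1 ≤ firstSum σ j → σ ≠ τmin →
      ∃ v : Equiv.Perm (Fin n), BruhatCover v σ ∧ invCount σ = invCount v + 1 ∧
        j * (j + 1) / 2 + 1 ≤ firstSum v j := by
    intro σ hfs hτ
    by_cases hdesc : ∃ (i : ℕ) (h1 : i + 1 < n), (i + 1 < j ∨ j ≤ i) ∧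
        ((σ ⟨i + 1, h1⟩ : ℕ) < σ ⟨i, Nat.lt_of_succ_lt h1⟩)
    · obtain ⟨i, h1, hblock, hlt⟩ := hdesc
      set q : Fin n := ⟨i, Nat.lt_of_succ_lt h1⟩ with hqd
      set p : Fin n := ⟨i + 1, h1⟩ with hpd
      have hqp : q < p := by simp [hqd, hpd, Fin.lt_def]
      have hval : σ p < σ q := by
        rw [Fin.lt_def]; exact hlt
      have hmid : ∀ r : Fin n, q < r → r < p → σ r < σ p ∨ σ q < σ r := by
        intro r hr1 hr2
        exfalso
        rw [Fin.lt_def] at hr1 hr2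
        simp only [hqd, hpd] at hr1 hr2
        omega
      refine ⟨σ * Equiv.swap q p, cover_swap σ q p hqp hval hmid,
        cover_key σ q p hqp hval hmid, ?_⟩
      rw [firstSum_swap_same_block σ j q p ?_]
      · exact hfs
      · rcases hblock with h | h
        · exact Or.inl ⟨by simp [hqd]; omega, by simp [hpd]; omega⟩
        · exact Or.inr ⟨by simp [hqd]; omega, by simp [hpd]; omega⟩
    · push_neg at hdesc
      have hinc : ∀ (i : ℕ) (h1 : i + 1 < n), (i + 1 < j ∨ j ≤ i) →
          (σ ⟨i, Nat.lt_of_succ_lt h1⟩ : ℕ) < σ ⟨i + 1, h1⟩ := by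
        intro i h1 hb
        have h2 := hdesc i h1 hb
        have hne : (σ ⟨i + 1, h1⟩ : ℕ) ≠ (σ ⟨i, Nat.lt_of_succ_lt h1⟩ : ℕ) := by
          intro hc
          have := σ.injective (Fin.ext hc)
          simp only [Fin.mk.injEq] at this
          omega
        omega
      by_cases hfe : firstSum σ j = j * (j + 1) / 2 + 1
      · exact absurd (classify n j hj hjn σ τmin hτmin hfe hinc) hτ
      · -- cross swap case
        have hfs' : j * (j + 1) / 2 + 2 ≤ firstSum σ j := by omega
        set S : Finset (Fin n) :=
          (Finset.univ.filter (fun i : Fin n => (i : ℕ) < j)).image σ with hSd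
        have hScard : S.card = j := by
          rw [hSd, Finset.card_image_of_injective _ σ.injective]
          exact card_filter_lt j (by omega) (by omega)
        have hmemS : ∀ x : Fin n, x ∈ S ↔ ∃ i : Fin n, (i : ℕ) < j ∧ σ i = x := by
          intro x
          simp [hSd, Finset.mem_image, Finset.mem_filter]
        -- a value not in S
        have hex : ∃ m : ℕ, ∃ h : m < n, (⟨m, h⟩ : Fin n) ∉ S := by
          by_contra hc
          push_neg at hc
          have : Finset.univ ⊆ S := by
            intro x _
            have := hc (x : ℕ) x.is_lt
            rwa [Fin.eta] at this
          have := Finset.card_le_card this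
          rw [hScard, Finset.card_univ, Fintype.card_fin] at this
          omega
        set m₀ : ℕ := Nat.find hex with hm₀d
        obtain ⟨hm₀n, hm₀S⟩ := Nat.find_spec hex
        have hm₀min : ∀ m, m < m₀ → ∀ h : m < n, (⟨m, h⟩ : Fin n) ∈ S := by
          intro m hm h
          have := Nat.find_min hex hm
          push_neg at this
          exact this h
        -- the set of elements of S above m₀ is nonempty
        have hWne : (S.filter (fun w : Fin n => m₀ < (w : ℕ))).Nonempty := by
          by_contra hc
          rw [Finset.not_nonempty_iff_eq_empty] at hc
          have hall : ∀ w ∈ S, (w : ℕ) < m₀ := by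
            intro w hw
            have h1 : ¬ (m₀ < (w : ℕ)) := by
              intro h2
              have : w ∈ S.filter (fun w : Fin n => m₀ < (w : ℕ)) := Finset.mem_filter.2 ⟨hw, h2⟩
              rw [hc] at this
              exact absurd this (Finset.notMem_empty w)
            have h2 : (w : ℕ) ≠ m₀ := by
              intro hc2
              apply hm₀S
              have : (⟨m₀, hm₀n⟩ : Fin n) = w := Fin.ext hc2.symm
              rwa [this]
            omega
          have hSeq : S = Finset.univ.filter (fun i : Fin n => (i : ℕ) < m₀) := by
            ext w
            simp only [Finset.mem_filter, Finset.mem_univ, true_and]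
            constructor
            · exact hall w
            · intro hw
              have := hm₀min (w : ℕ) hw w.is_lt
              rwa [Fin.eta] at this
          have hm₀j : m₀ = j := by
            have := hScard
            rw [hSeq, card_filter_lt m₀ (by omega) (by omega)] at this
            exact this
          -- firstSum = minimal, contradiction
          have hfsum : firstSum σ j = ∑ w ∈ S, ((w : ℕ) + 1) := by
            unfold firstSum
            rw [hSd]
            rw [Finset.sum_image (fun x _ y _ h => σ.injective h)]
          have : (∑ w ∈ S, ((w : ℕ) + 1)) = ∑ i ∈ Finset.range j, (i + 1) := by
            rw [hSeq, hm₀j]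
            exact sum_filter_lt (fun i => i + 1) j (by omega) (by omega)
          have hT : j * (j + 1) / 2 = (∑ i ∈ Finset.range j, i) + j := by
            have h1 : (∑ i ∈ Finset.range (j + 1), i) = (∑ i ∈ Finset.range j, i) + j :=
              Finset.sum_range_succ (fun i => i) j
            have h2 : (∑ i ∈ Finset.range (j + 1), i) = (j + 1) * (j + 1 - 1) / 2 :=
              Finset.sum_range_id (j + 1)
            rw [Nat.add_sub_cancel] at h2
            rw [Nat.mul_comm j (j + 1)]
            omega
          have hsum2 : (∑ i ∈ Finset.range j, (i + 1))
              = (∑ i ∈ Finset.range j, i) + j := by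
            rw [Finset.sum_add_distrib, Finset.sum_const, Finset.card_range, smul_eq_mul,
              mul_one]
          omega
        set b : Fin n := (S.filter (fun w : Fin n => m₀ < (w : ℕ))).min' hWne with hbd
        have hbmem := (S.filter (fun w : Fin n => m₀ < (w : ℕ))).min'_mem hWne
        rw [← hbd] at hbmem
        obtain ⟨hbS, hbm⟩ := Finset.mem_filter.1 hbmem
        have hb1 : 1 ≤ (b : ℕ) := by omega
        have hbpred : ∀ h : (b : ℕ) - 1 < n, (⟨(b : ℕ) - 1, h⟩ : Fin n) ∉ S := by
          intro h hcmem
          rcases Nat.lt_trichotomy ((b : ℕ) - 1) m₀ with h2 | h2 | h2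
          · omega
          · apply hm₀S
            have : (⟨m₀, hm₀n⟩ : Fin n) = (⟨(b : ℕ) - 1, h⟩ : Fin n) := Fin.ext h2.symm
            rwa [this]
          · have hmem2 : (⟨(b : ℕ) - 1, h⟩ : Fin n) ∈ S.filter (fun w : Fin n => m₀ < (w : ℕ)) :=
              Finset.mem_filter.2 ⟨hcmem, h2⟩
            have := Finset.min'_le _ _ hmem2
            rw [← hbd] at this
            rw [Fin.le_def] at this
            simp only at this
            omega
        obtain ⟨q, hqj, hqb⟩ := (hmemS b).1 hbS
        have hblt : (b : ℕ) - 1 < n := by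
          have := b.is_lt; omega
        set p : Fin n := σ.symm ⟨(b : ℕ) - 1, hblt⟩ with hpd
        have hσp : σ p = ⟨(b : ℕ) - 1, hblt⟩ := σ.apply_symm_apply _
        have hpj : j ≤ (p : ℕ) := by
          by_contra hc
          push_neg at hc
          have : σ p ∈ S := (hmemS _).2 ⟨p, hc, rfl⟩
          rw [hσp] at this
          exact hbpred hblt this
        have hqp : q < p := by
          rw [Fin.lt_def]; omega
        have hval : σ p < σ q := by
          rw [Fin.lt_def, hσp, hqb]
          simp only
          omega
        have hmid : ∀ r : Fin n, q < r → r < p → σ r < σ p ∨ σ q < σ r := by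
          intro r h1 h2
          rcases Nat.lt_trichotomy ((σ r : ℕ)) ((b : ℕ) - 1) with h | h | h
          · left
            rw [Fin.lt_def, hσp]
            simpa using h
          · exfalso
            have : σ r = σ p := by
              rw [hσp]; exact Fin.ext (by simpa using h)
            have := σ.injective this
            rw [this] at h2
            exact absurd h2 (lt_irrefl _)
          · have hne : (σ r : ℕ) ≠ (b : ℕ) := by
              intro hc
              have : σ r = σ q := by
                rw [hqb]; exact Fin.ext hc
              have := σ.injective this
              rw [this] at h1
              exact absurd h1 (lt_irrefl _)
            right
            rw [Fin.lt_def, hqb]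
            omega
        refine ⟨σ * Equiv.swap q p, cover_swap σ q p hqp hval hmid,
          cover_key σ q p hqp hval hmid, ?_⟩
        have hcross := firstSum_swap_cross σ j q p hqj hpj
          (by rw [hσp, hqb]; simp only; omega)
        omega
  -- strong induction on invCount
  suffices H : ∀ k (σ : Equiv.Perm (Fin n)), invCount σ ≤ k →
      j * (j + 1) / 2 + 1 ≤ firstSum σ j → BruhatLE τmin σ by
    exact H (invCount σ) σ le_rfl hσ
  intro k
  induction k with
  | zero =>
    intro σ hk hfs
    by_cases hτ : σ = τmin
    · subst hτ; exact Relation.ReflTransGen.refl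
    · obtain ⟨v, hcov, hinv, hfsv⟩ := step σ hfs hτ
      omega
  | succ k ih =>
    intro σ hk hfs
    by_cases hτ : σ = τmin
    · subst hτ; exact Relation.ReflTransGen.refl
    · obtain ⟨v, hcov, hinv, hfsv⟩ := step σ hfs hτ
      exact Relation.ReflTransGen.tail (ih v (by omega) hfsv) hcov
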